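/- arXiv:2008.03166 — 2 statements merged into one kernel-verified Lean document; each statement's English description precedes it below -/
import Mathlib

section
/- Let μ be a partition of n, i ≥ 2 with i < s = length(μ), satisfying μ(i) < μ(i−1) + ⌊(μ(i−1)−1)/(i−1)⌋ where μ(j) = μ_1+...+μ_j−j+1. Write μ(i−1) − 1 = e(i−1) + f with 0 ≤ f ≤ i−2. Then the sequence μ̃ = (e+2 repeated f times, e+1 repeated (i−1−f) times, μ_i + 1, μ_{i+1}, ..., μ_{s−1}, μ_s − 1) (with a final part μ_s − 1 dropped if μ_s = 1) is a weakly decreasing sequence of nonnegative integers with total sum n. -/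
private lemma list_len_le_sum (l : List ℕ) (h : ∀ x ∈ l, 0 < x) : l.length ≤ l.sum := by
  induction l with
  | nil => simp
  | cons a t ih =>
    simp only [List.length_cons, List.sum_cons]
    have h1 := h a (by simp)
    have h2 := ih (fun x hx => h x (by simp [hx]))
    omega

/-- Under the hypotheses of the main theorem's minimality argument
(`μ(i) < μ(i-1) + e` where `μ(i-1) - 1 = e(i-1) + f`, `0 ≤ f ≤ i-2`, `i < s`),
the modified sequence `μ̃ = (e+2 (f times), e+1 (i-1-f times), μ_i + 1,
μ_{i+1}, …, μ_{s-1}, μ_s - 1)` is a weakly decreasing sequence of nonnegative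
integers with total sum `n`. -/
theorem mu_tilde_is_partition (n i e f : ℕ) (μ : List ℕ)
    (hsorted : μ.Pairwise (· ≥ ·)) (hpos : ∀ x ∈ μ, 0 < x) (hsum : μ.sum = n)
    (hi : 2 ≤ i) (hlen : i < μ.length)
    (hf : f ≤ i - 2)
    (hdiv : ((μ.take (i - 1)).sum + 1 - (i - 1)) - 1 = e * (i - 1) + f)
    (hcond : (μ.take i).sum + 1 - i < ((μ.take (i - 1)).sum + 1 - (i - 1)) + e) :
    (let μt : List ℕ :=
      List.replicate f (e + 2) ++ List.replicate (i - 1 - f) (e + 1) ++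
        [μ[i - 1]! + 1] ++ (μ.drop i).dropLast ++ [μ.getLast! - 1]
     μt.Pairwise (· ≥ ·) ∧ μt.sum = n) := by
  have hμne : μ ≠ [] := by
    intro h; rw [h] at hlen; simp at hlen
  have hi1 : i - 1 < μ.length := by omega
  have gE : μ[i - 1]! = μ[i - 1] := getElem!_pos μ (i - 1) hi1

  set d := μ.drop i with hd
  have hdne : d ≠ [] := by
    intro h
    have := congrArg List.length h
    simp [hd] at this
    omega
  have hii : i - 1 + 1 = i := by omega
  -- take i splits
  have htake : (μ.take i).sum = (μ.take (i - 1)).sum + μ[i - 1] := by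
    conv_lhs => rw [← hii]
    rw [List.sum_take_succ μ (i - 1) hi1]
  -- lower bound on head sum
  have hA : i - 1 ≤ (μ.take (i - 1)).sum := by
    have := list_len_le_sum (μ.take (i - 1)) (fun x hx => hpos x (List.mem_of_mem_take hx))
    rwa [List.length_take, min_eq_left (by omega)] at this
  have hAi : i ≤ (μ.take i).sum := by
    have := list_len_le_sum (μ.take i) (fun x hx => hpos x (List.mem_of_mem_take hx))
    rwa [List.length_take, min_eq_left (by omega)] at this
  -- key numeric facts
  have hμie : μ[i - 1] ≤ e := by omega
  have hM : (μ.take (i - 1)).sum = e * (i - 1) + f + (i - 1) := by omega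
  -- structural facts about d
  have hcons : μ.drop (i - 1) = μ[i - 1] :: d := by
    rw [List.drop_eq_getElem_cons hi1, hii]
  have hdsorted : d.Pairwise (· ≥ ·) := hsorted.sublist (List.drop_sublist i μ)
  have hub : ∀ x ∈ d, x ≤ μ[i - 1] := by
    have := hsorted.sublist (List.drop_sublist (i - 1) μ)
    rw [hcons, List.pairwise_cons] at this
    exact fun x hx => this.1 x hx
  have glast_d : μ.getLast! = d.getLast hdne := by
    apply List.getLast!_of_getLast?
    conv_lhs => rw [← List.take_append_drop i μ]
    rw [List.getLast?_append_of_ne_nil _ hdne]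
    exact List.getLast?_eq_getLast hdne
  have hlast_mem : d.getLast hdne ∈ d := List.getLast_mem hdne
  have hlast_pos : 0 < d.getLast hdne :=
    hpos _ (List.mem_of_mem_drop hlast_mem)
  have hdl : d.dropLast ++ [d.getLast hdne] = d := List.dropLast_append_getLast hdne
  have hlb : ∀ x ∈ d.dropLast, d.getLast hdne ≤ x := by
    intro x hx
    have hs : (d.dropLast ++ [d.getLast hdne]).Pairwise (· ≥ ·) := by rw [hdl]; exact hdsorted
    rw [List.pairwise_append] at hs
    exact hs.2.2 x hx _ (by simp)
  have hmemdl : ∀ x ∈ d.dropLast, x ∈ d := fun x hx => (List.dropLast_sublist d).mem hx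
  have hdsum : d.dropLast.sum + d.getLast hdne = d.sum := by
    conv_rhs => rw [← hdl]
    simp
  have hμsum : μ.sum = (μ.take (i - 1)).sum + μ[i - 1] + d.sum := by
    conv_lhs => rw [← List.take_append_drop i μ]
    rw [List.sum_append, htake]
  have hdlsorted : d.dropLast.Pairwise (· ≥ ·) := hdsorted.sublist (List.dropLast_sublist d)
  refine ⟨?_, ?_⟩
  · -- sortedness
    rw [gE, glast_d]
    change List.Pairwise _ _
    simp only [List.pairwise_append, List.pairwise_replicate,
      List.mem_append, List.mem_replicate, List.mem_singleton, List.pairwise_cons,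
      List.Pairwise.nil, List.mem_singleton, List.not_mem_nil, List.mem_cons, ge_iff_le]
    have hlub : d.getLast hdne ≤ μ[i - 1] := hub _ hlast_mem
    refine ⟨⟨⟨⟨Or.inr le_rfl, Or.inr le_rfl, ?_⟩, ⟨fun a' h => h.elim, trivial⟩, ?_⟩,
      hdlsorted, ?_⟩, ⟨fun a' h => h.elim, trivial⟩, ?_⟩
    · rintro a ⟨-, rfl⟩ b ⟨-, rfl⟩; omega
    · rintro a (⟨-, rfl⟩ | ⟨-, rfl⟩) b (rfl | h)
      · omega
      · exact h.elim
      · omega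
      · exact h.elim
    · rintro a ((⟨-, rfl⟩ | ⟨-, rfl⟩) | rfl | h) b hb
      · have := hub b (hmemdl b hb); omega
      · have := hub b (hmemdl b hb); omega
      · have := hub b (hmemdl b hb); omega
      · exact h.elim
    · rintro a (((⟨-, rfl⟩ | ⟨-, rfl⟩) | rfl | h) | hmem) b (rfl | hb)
      · omega
      · exact hb.elim
      · omega
      · exact hb.elim
      · omega
      · exact hb.elim
      · exact h.elim
      · exact h.elim
      · have := hlb a hmem; omega
      · exact hb.elim
  · -- sum
    rw [gE, glast_d]
    simp only [List.sum_append, List.sum_replicate, smul_eq_mul, List.sum_cons,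
      List.sum_nil, add_zero, List.sum_singleton]
    have key : f * (e + 2) + (i - 1 - f) * (e + 1) = (μ.take (i - 1)).sum := by
      have hfi : f + (i - 1 - f) = i - 1 := by omega
      have : f * (e + 2) + (i - 1 - f) * (e + 1) = (f + (i - 1 - f)) * (e + 1) + f := by
        ring
      rw [this, hfi, hM]; ring
    have hn : n = (μ.take (i - 1)).sum + μ[i - 1] + d.sum := by rw [← hsum, hμsum]
    omega
end

section
/- Let μ be a partition of n, i ≥ 2, with hypotheses as above (μ_i ≤ e where μ(i−1) − 1 = e(i−1) + f, 0 ≤ f ≤ i−2), and let μ̃ be the modified partition (f parts e+2, then i−1−f parts e+1, then μ_i+1, μ_{i+1}, ..., μ_{s−1}, μ_s−1). Then μ(j) ≥ μ̃(j) for all 1 ≤ j ≤ i−1, and μ(i) < μ̃(i), where ν(j) = ν_1 + ... + ν_j − j + 1. -/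
/-- Prefix sums of a sorted-decreasing list dominate those of the balanced
sequence with the same total. -/
lemma sorted_prefix_dom (μ : List ℕ) (hs : μ.Pairwise (· ≥ ·))
    (m j q f : ℕ) (hj : 1 ≤ j) (hjm : j ≤ m) (hm : m ≤ μ.length)
    (hS : (μ.take m).sum = q * m + f) :
    q * j + min j f ≤ (μ.take j).sum := by
  by_contra hcon
  push_neg at hcon
  have hjl : j ≤ μ.length := le_trans hjm hm
  have hj1 : j - 1 < μ.length := by omega
  -- Step A : μ[j-1] ≤ q
  have hA : μ[j-1]'hj1 ≤ q := by
    by_contra hA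
    push_neg at hA
    have hall : ∀ x ∈ μ.take j, q + 1 ≤ x := by
      intro x hx
      obtain ⟨k, hk, rfl⟩ := List.mem_iff_getElem.mp hx
      have hk' : k < j := by simp [List.length_take] at hk; omega
      rw [List.getElem_take]
      have hkl : k < μ.length := by omega
      have := hs.rel_get_of_le (a := ⟨k, hkl⟩) (b := ⟨j-1, hj1⟩) (by
        simp [Fin.le_def]; omega)
      simp only [List.get_eq_getElem] at this
      omega
    have hlow := List.card_nsmul_le_sum (μ.take j) (q+1) hall
    rw [List.length_take, smul_eq_mul] at hlow
    have hmin : min j μ.length = j := by omega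
    rw [hmin] at hlow
    have hexp : j * (q+1) = q * j + j := by ring
    have hle : min j f ≤ j := min_le_left _ _
    linarith
  -- Step B : every later element ≤ q
  have hB : ∀ x ∈ (μ.take m).drop j, x ≤ q := by
    intro x hx
    obtain ⟨k, hk, rfl⟩ := List.mem_iff_getElem.mp hx
    rw [List.getElem_drop, List.getElem_take]
    have hkl : j + k < μ.length := by
      simp [List.length_drop, List.length_take] at hk
      omega
    have := hs.rel_get_of_le (a := ⟨j-1, hj1⟩) (b := ⟨j+k, hkl⟩) (by
      simp [Fin.le_def]; omega)
    simp only [List.get_eq_getElem] at this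
    omega
  have hBsum := List.sum_le_card_nsmul _ q hB
  rw [List.length_drop, List.length_take, smul_eq_mul] at hBsum
  have hminm : min m μ.length = m := by omega
  rw [hminm] at hBsum
  have hsplit : ((μ.take m).take j).sum + ((μ.take m).drop j).sum = (μ.take m).sum :=
    List.sum_take_add_sum_drop _ _
  rw [List.take_take] at hsplit
  have hminj : min j m = j := by omega
  rw [hminj] at hsplit
  have hminjf : min j f ≤ f := min_le_right _ _
  have hq : q * j + (m - j) * q = q * m := by
    rw [mul_comm (m - j) q, ← Nat.mul_add]
    congr 1
    omega
  linarith

/-- With `μ̃` the modified partition (`f` parts `e+2`, then `i-1-f` parts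
`e+1`, then `μ_i + 1, μ_{i+1}, …, μ_{s-1}, μ_s - 1`), one has
`μ(j) ≥ μ̃(j)` for all `1 ≤ j ≤ i-1`, and `μ(i) < μ̃(i)`, where
`ν(j) = ν_1 + ⋯ + ν_j - j + 1`. -/
theorem mu_tilde_comparison (n i e f : ℕ) (μ : List ℕ)
    (hsorted : μ.Pairwise (· ≥ ·)) (hpos : ∀ x ∈ μ, 0 < x) (hsum : μ.sum = n)
    (hi : 2 ≤ i) (hlen : i < μ.length)
    (hf : f ≤ i - 2)
    (hdiv : ((μ.take (i - 1)).sum + 1 - (i - 1)) - 1 = e * (i - 1) + f)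
    (hμi : μ[i - 1]! ≤ e) :
    (let μt : List ℕ :=
      List.replicate f (e + 2) ++ List.replicate (i - 1 - f) (e + 1) ++
        [μ[i - 1]! + 1] ++ (μ.drop i).dropLast ++ [μ.getLast! - 1]
     (∀ j : ℕ, 1 ≤ j → j ≤ i - 1 →
        (μt.take j).sum + 1 - j ≤ (μ.take j).sum + 1 - j) ∧
       (μ.take i).sum + 1 - i < (μt.take i).sum + 1 - i) := by
  intro μt
  set m := i - 1 with hm
  have hm1 : 1 ≤ m := by omega
  have hml : m < μ.length := by omega
  have hfm : f ≤ m := by omega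
  -- S ≥ m
  have hSm : m ≤ (μ.take m).sum := by
    have := List.card_nsmul_le_sum (μ.take m) 1 (fun x hx => hpos x (List.mem_of_mem_take hx))
    rw [List.length_take, smul_eq_mul, mul_one] at this
    omega
  set S := (μ.take m).sum with hSdef
  have hSval : S = (e + 1) * m + f := by
    have hthis : S + 1 - m - 1 = e * m + f := hdiv
    obtain ⟨P, hP⟩ : ∃ P, P = e * m := ⟨_, rfl⟩
    rw [← hP] at hthis
    have h2 : S = P + f + m := by omega
    rw [h2, hP]; ring
  -- sum of μt.take j for j ≤ m
  have htake : ∀ j ≤ m, (μt.take j).sum = (e+1) * j + min j f := by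
    intro j hjm
    show ((List.replicate f (e + 2) ++ List.replicate (m - f) (e + 1) ++
        [μ[i - 1]! + 1] ++ (μ.drop i).dropLast ++ [μ.getLast! - 1]).take j).sum = _
    rw [List.append_assoc, List.append_assoc, List.append_assoc,
      List.take_append, List.take_append,
      List.take_replicate, List.take_replicate, List.length_replicate,
      List.length_replicate]
    have h0 : j - f - (m - f) = 0 := by omega
    rw [h0, List.take_zero, List.append_nil, List.sum_append,
      List.sum_replicate, List.sum_replicate, smul_eq_mul, smul_eq_mul]
    rcases le_total j f with h | h
    · have h1 : min j f = j := by omega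
      have h2 : j - f = 0 := by omega
      rw [h1, h2, Nat.zero_min]
      ring
    · have h1 : min j f = f := by omega
      set d := j - f with hd
      have hjd : j = f + d := by omega
      have h3 : min d (m - f) = d := by omega
      rw [h1, h3, hjd]
      ring
  constructor
  · intro j hj1 hjm
    have hkey := sorted_prefix_dom μ hsorted m j (e+1) f hj1 hjm (le_of_lt hml) hSval
    have := htake j hjm
    omega
  · -- second part
    have hiS : i = m + 1 := by omega
    have hμtake : (μ.take i).sum = S + μ[m]'hml := by
      rw [hiS, List.sum_take_succ μ m hml]
    have hget : μ[i-1]! = μ[m]'hml := by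
      rw [← hm]
      exact getElem!_pos μ (i-1) (by omega)
    -- μt.take i
    have hμttake : (μt.take i).sum = S + μ[i-1]! + 1 := by
      show ((List.replicate f (e + 2) ++ List.replicate (m - f) (e + 1) ++
          [μ[i - 1]! + 1] ++ (μ.drop i).dropLast ++ [μ.getLast! - 1]).take i).sum = _
      rw [List.append_assoc, List.append_assoc, List.append_assoc,
        List.take_append, List.take_append,
        List.take_replicate, List.take_replicate, List.length_replicate,
        List.length_replicate]
      have h1 : min i f = f := by omega
      have h2 : min (i - f) (m - f) = m - f := by omega
      have h3 : i - f - (m - f) = 1 := by omega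
      rw [h1, h2, h3]
      rw [List.take_left' (by simp : ([μ[i - 1]! + 1] : List ℕ).length = 1)]
      rw [List.sum_append, List.sum_append, List.sum_replicate, List.sum_replicate,
        smul_eq_mul, smul_eq_mul]
      simp only [List.sum_cons, List.sum_nil]
      set d := m - f with hd
      have hmd : m = f + d := by omega
      have hq : f * (e+2) + d * (e+1) = (e+1) * m + f := by
        rw [hmd]; ring
      rw [hSval, ← hq]
      ring
    rw [hμtake, hμttake, ← hget]
    omega
end
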